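/- If α is a real number and s is a real number such that cos(kα) + s·sin(kα) > 0 for every natural number k ≥ 1, then the 2×2 rotation matrix by angle α equals the identity matrix (i.e., cos α = 1 and sin α = 0). -/

import Mathlib

open Real Matrix

theorem stmt_0 (α s : ℝ)
    (h : ∀ k : ℕ, 1 ≤ k → Real.cos (k * α) + s * Real.sin (k * α) > 0) :
    !![Real.cos α, Real.sin α; -Real.sin α, Real.cos α] =
      (1 : Matrix (Fin 2) (Fin 2) ℝ) := by
  -- Step 0: the doubling identity
  have hdouble : ∀ k : ℕ, 1 ≤ k →
      Real.cos ((2 * k : ℕ) * α) = 2 * Real.cos (k * α) ^ 2 - 1 ∧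
      Real.sin ((2 * k : ℕ) * α) = 2 * Real.sin (k * α) * Real.cos (k * α) := by
    intro k hk
    have h2 : ((2 * k : ℕ) : ℝ) * α = 2 * ((k : ℝ) * α) := by push_cast; ring
    rw [h2, Real.cos_two_mul, Real.sin_two_mul]
    exact ⟨rfl, rfl⟩
  -- Step 1: cos (k α) > 0 for all k ≥ 1
  have hc : ∀ k : ℕ, 1 ≤ k → 0 < Real.cos (k * α) := by
    intro k hk
    have hf := h k hk
    have hf2 := h (2 * k) (by omega)
    obtain ⟨hcd, hsd⟩ := hdouble k hk
    rw [hcd, hsd] at hf2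
    have hpy := Real.sin_sq_add_cos_sq ((k : ℝ) * α)
    nlinarith [sq_nonneg (Real.sin ((k:ℝ) * α)), sq_nonneg (Real.cos ((k:ℝ)*α) + s * Real.sin ((k:ℝ)*α)), sq_nonneg (s * Real.sin ((k:ℝ)*α))]
  -- Step 2: cos (k α) ≥ cos (π / 2 ^ (n+1)) by induction
  have hstep : ∀ n : ℕ, ∀ k : ℕ, 1 ≤ k → Real.cos (π / 2 ^ (n + 1)) ≤ Real.cos (k * α) := by
    intro n
    induction n with
    | zero =>
      intro k hk
      have he : π / 2 ^ (0 + 1) = π / 2 := by norm_num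
      rw [he, Real.cos_pi_div_two]
      exact (hc k hk).le
    | succ n ih =>
      intro k hk
      have h2k := ih (2 * k) (by omega)
      obtain ⟨hcd, _⟩ := hdouble k hk
      rw [hcd] at h2k
      have hhalf : Real.cos (π / 2 ^ (n + 2)) ^ 2 = 1 / 2 + Real.cos (π / 2 ^ (n + 1)) / 2 := by
        have : (2 : ℝ) * (π / 2 ^ (n + 2)) = π / 2 ^ (n + 1) := by
          rw [pow_succ]; field_simp
        rw [← this, ← Real.cos_sq]
      have hnn : 0 ≤ Real.cos (π / 2 ^ (n + 2)) := by
        apply Real.cos_nonneg_of_mem_Icc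
        constructor
        · have : (0:ℝ) ≤ π / 2 ^ (n + 2) := by positivity
          linarith [Real.pi_pos]
        · rw [div_le_div_iff₀ (by positivity) (by norm_num)]
          have : (2:ℝ) ≤ 2 ^ (n + 2) := by
            calc (2:ℝ) = 2 ^ 1 := by norm_num
            _ ≤ 2 ^ (n + 2) := by apply pow_le_pow_right₀ (by norm_num); omega
          nlinarith [Real.pi_pos]
      nlinarith [hc k hk, hnn]
  -- Step 3: cos α = 1
  have hcos1 : Real.cos α = 1 := by
    have hle : (1 : ℝ) ≤ Real.cos α := by
      have htend : Filter.Tendsto (fun n : ℕ => Real.cos (π / 2 ^ (n + 1)))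
          Filter.atTop (nhds 1) := by
        have h1 : Filter.Tendsto (fun n : ℕ => π / 2 ^ (n + 1)) Filter.atTop (nhds 0) := by
          have h2 : Filter.Tendsto (fun n : ℕ => π * (1/2 : ℝ) ^ (n + 1)) Filter.atTop
              (nhds (π * 0)) := by
            apply Filter.Tendsto.const_mul
            exact (tendsto_pow_atTop_nhds_zero_of_lt_one (by norm_num) (by norm_num)).comp
              (Filter.tendsto_add_atTop_nat 1)
          simpa [div_eq_mul_inv, ← inv_pow] using h2
        have := (Real.continuous_cos.tendsto 0).comp h1
        simpa only [Function.comp_def, Real.cos_zero] using this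
      apply le_of_tendsto htend
      filter_upwards with n
      have := hstep n 1 le_rfl
      simpa using this
    linarith [Real.cos_le_one α]
  have hsin0 : Real.sin α = 0 := by
    have := Real.sin_sq_add_cos_sq α
    nlinarith
  rw [hcos1, hsin0, Matrix.one_fin_two]
  norm_num
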